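/- arXiv:1303.0353 — 4 statements merged into one kernel-verified Lean document; each statement's English description precedes it below -/
import Mathlib

section
/- Let A, B, C be square matrices and M, N matrices of compatible sizes. Then rank(A(MN) - (MN)C) ≤ rank(AM - MB) + rank(BN - NC). That is, the displacement rank of a product MN with respect to (A,C) is at most the sum of displacement ranks of M w.r.t. (A,B) and of N w.r.t. (B,C). -/
lemma matrix_rank_add_le' {K : Type*} [Field K] {m n : ℕ}
    (X Y : Matrix (Fin m) (Fin n) K) : (X + Y).rank ≤ X.rank + Y.rank := by
  simp only [Matrix.rank]
  have hrange : LinearMap.range (X + Y).mulVecLin ≤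
      LinearMap.range X.mulVecLin ⊔ LinearMap.range Y.mulVecLin := by
    rintro _ ⟨v, rfl⟩
    exact Submodule.mem_sup.2 ⟨X.mulVecLin v, ⟨v, rfl⟩, Y.mulVecLin v, ⟨v, rfl⟩, by
      simp [Matrix.mulVecLin, Matrix.add_mulVec]⟩
  exact le_trans (Submodule.finrank_mono hrange)
    (Submodule.finrank_add_le_finrank_add_finrank _ _)

theorem displacement_rank_product {K : Type*} [Field K] (m k p : ℕ)
    (A : Matrix (Fin m) (Fin m) K) (M : Matrix (Fin m) (Fin k) K)
    (B : Matrix (Fin k) (Fin k) K) (N : Matrix (Fin k) (Fin p) K)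
    (C : Matrix (Fin p) (Fin p) K) :
    (A * (M * N) - (M * N) * C).rank ≤ (A * M - M * B).rank + (B * N - N * C).rank := by
  have h : A * (M * N) - (M * N) * C = (A * M - M * B) * N + M * (B * N - N * C) := by
    simp only [Matrix.sub_mul, Matrix.mul_sub, Matrix.mul_assoc]
    abel
  rw [h]
  calc ((A * M - M * B) * N + M * (B * N - N * C)).rank
      ≤ ((A * M - M * B) * N).rank + (M * (B * N - N * C)).rank := matrix_rank_add_le' _ _
    _ ≤ (A * M - M * B).rank + (B * N - N * C).rank :=
        Nat.add_le_add (Matrix.rank_mul_le_left _ _) (Matrix.rank_mul_le_right _ _)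
end

section
/- Let s_1,...,s_n be scalars, V = (s_i^{j-1})_{i,j=1}^n the Vandermonde matrix, D_s = diag(s_1,...,s_n), and Z_e the unit e-circulant shift matrix. Then V·Z_e = D_s·V - ((s_i^n - e))_{i=1}^n · e_n^T, where e_n is the last standard basis vector. Consequently rank(D_s V - V Z_e) ≤ 1, with equality to 0 when s_i^n = e for all i. -/
/-- The `n×n` unit `e`-circulant shift matrix `Z_e`. -/
def Zmat (n : ℕ) {K : Type*} [Field K] (e : K) : Matrix (Fin n) (Fin n) K :=
  Matrix.of fun i j =>
    if (i : ℕ) = (j : ℕ) + 1 then 1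
    else if (i : ℕ) = 0 ∧ (j : ℕ) = n - 1 then e else 0

theorem vandermonde_displacement {K : Type*} [Field K] (n : ℕ) (hn : 0 < n)
    (s : Fin n → K) (e : K)
    (V : Matrix (Fin n) (Fin n) K) (hV : ∀ i j, V i j = s i ^ (j : ℕ)) :
    V * Zmat n e
      = Matrix.diagonal s * V
        - (Matrix.of fun i j => if (j : ℕ) = n - 1 then s i ^ n - e else 0 : Matrix (Fin n) (Fin n) K) ∧
    (Matrix.diagonal s * V - V * Zmat n e).rank ≤ 1 ∧
    ((∀ i, s i ^ n = e) → (Matrix.diagonal s * V - V * Zmat n e).rank = 0) := by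
  have key : V * Zmat n e
      = Matrix.diagonal s * V
        - (Matrix.of fun i j => if (j : ℕ) = n - 1 then s i ^ n - e else 0 :
            Matrix (Fin n) (Fin n) K) := by
    ext i j
    rw [Matrix.mul_apply]
    simp only [Matrix.sub_apply, Matrix.diagonal_mul, Matrix.of_apply, Zmat, hV]
    by_cases hj : (j : ℕ) = n - 1
    · rw [Finset.sum_eq_single (⟨0, hn⟩ : Fin n)]
      · have h01 : ¬ ((0 : ℕ) = n - 1 + 1) := by omega
        have hpow : s i ^ n = s i * s i ^ (n - 1) := by
          conv_lhs => rw [show n = (n - 1) + 1 by omega]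
          rw [pow_succ]; ring
        simp [hj, h01]
        rw [hpow]; ring
      · intro k _ hk
        have hk0 : (k : ℕ) ≠ 0 := fun h => hk (Fin.ext h)
        have hk1 : (k : ℕ) ≠ (j : ℕ) + 1 := by have := k.isLt; omega
        simp [hk0, hk1]
      · intro h; exact absurd (Finset.mem_univ _) h
    · have hjlt : (j : ℕ) + 1 < n := by have := j.isLt; omega
      rw [Finset.sum_eq_single (⟨(j : ℕ) + 1, hjlt⟩ : Fin n)]
      · simp [hj]
        ring
      · intro k _ hk
        have hk1 : (k : ℕ) ≠ (j : ℕ) + 1 := fun h => hk (Fin.ext h)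
        have hk0 : ¬((k : ℕ) = 0 ∧ (j : ℕ) = n - 1) := fun ⟨_, h⟩ => hj h
        simp [hk1, hk0]
      · intro h; exact absurd (Finset.mem_univ _) h
  refine ⟨key, ?_, ?_⟩
  · set u : Fin n → K := fun i => s i ^ n - e with hu
    set w : Fin n → K := fun j => if (j : ℕ) = n - 1 then 1 else 0 with hw
    have hM : Matrix.diagonal s * V - V * Zmat n e = Matrix.vecMulVec u w := by
      rw [key]
      ext i j
      simp only [Matrix.sub_apply, Matrix.of_apply, Matrix.vecMulVec_apply, hu, hw]
      by_cases hj : (j : ℕ) = n - 1 <;> simp [hj]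
    rw [hM, Matrix.rank]
    have hrange : LinearMap.range (Matrix.vecMulVec u w).mulVecLin
        ≤ Submodule.span K {u} := by
      rintro y ⟨x, rfl⟩
      rw [Matrix.mulVecLin_apply]
      have h : (Matrix.vecMulVec u w).mulVec x = (dotProduct w x) • u := by
        ext i
        simp [Matrix.mulVec, Matrix.vecMulVec_apply, dotProduct, Finset.mul_sum,
          mul_assoc, mul_comm, mul_left_comm]
      rw [h]
      exact Submodule.smul_mem _ _ (Submodule.subset_span rfl)
    refine le_trans (Submodule.finrank_mono hrange) ?_
    refine le_trans (finrank_span_le_card _) ?_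
    simp
  · intro hs
    have h0 : Matrix.diagonal s * V - V * Zmat n e = 0 := by
      rw [key]
      ext i j
      simp [hs i]
    rw [h0]
    exact Matrix.rank_zero
end

section
/- Let s_1,...,s_n, t_1,...,t_n be 2n pairwise distinct complex numbers, t(x) = Π_{j=1}^n (x - t_j). Then the Cauchy matrix factors as C_{s,t} = diag(1/t(s_i))_{i=1}^n · V_s · V_t^{-1} · diag(t'(t_j))_{j=1}^n, where V_s = (s_i^{j-1}) and V_t = (t_i^{j-1}) are Vandermonde matrices and t' is the derivative of t. -/
open Finset Polynomial

theorem cauchy_vandermonde_factorization (n : ℕ) (s t : Fin n → ℂ)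
    (hs : Function.Injective s) (ht : Function.Injective t)
    (hst : ∀ i j, s i ≠ t j)
    (C Vs Vt : Matrix (Fin n) (Fin n) ℂ)
    (hC : ∀ i j, C i j = (s i - t j)⁻¹)
    (hVs : ∀ i j, Vs i j = s i ^ (j : ℕ))
    (hVt : ∀ i j, Vt i j = t i ^ (j : ℕ)) :
    C = Matrix.diagonal (fun i => (∏ j, (s i - t j))⁻¹) * Vs * Vt⁻¹ *
          Matrix.diagonal (fun j => ∏ k ∈ Finset.univ.erase j, (t j - t k)) := by
  have htinj : Set.InjOn t (Finset.univ : Finset (Fin n)) := fun a _ b _ h => ht h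
  -- Lagrange interpolation identity
  have key : ∀ (z : ℂ) (j : Fin n), z ^ (j : ℕ) =
      ∑ k, t k ^ (j : ℕ) * ∏ m ∈ Finset.univ.erase k, ((t k - t m)⁻¹ * (z - t m)) := by
    intro z j
    have hdeg : (Polynomial.X ^ (j : ℕ) : Polynomial ℂ).degree <
        (Finset.univ : Finset (Fin n)).card := by
      rw [Polynomial.degree_X_pow]
      simp only [Finset.card_univ, Fintype.card_fin]
      exact_mod_cast j.2
    have h := Lagrange.eq_interpolate (v := t) htinj hdeg
    have h2 := congrArg (Polynomial.eval z) h
    simpa [Lagrange.interpolate_apply, Lagrange.basis, Lagrange.basisDivisor,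
      Polynomial.eval_finset_sum, Polynomial.eval_prod] using h2
  have hne : ∀ j, (∏ k ∈ Finset.univ.erase j, (t j - t k)) ≠ 0 := by
    intro j
    refine Finset.prod_ne_zero_iff.mpr fun k hk => sub_ne_zero.mpr fun h => ?_
    exact (Finset.mem_erase.mp hk).1 (ht h).symm
  have hVt' : Vt = Matrix.vandermonde t := by
    ext i j; rw [hVt]; rfl
  have hdet : IsUnit Vt.det := by
    rw [hVt', Matrix.det_vandermonde]
    refine (Finset.prod_ne_zero_iff.mpr fun i _ =>
      Finset.prod_ne_zero_iff.mpr fun j hj => sub_ne_zero.mpr fun h => ?_).isUnit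
    exact absurd (ht h) (Finset.mem_Ioi.mp hj).ne'
  set D1 := Matrix.diagonal (fun i => (∏ j, (s i - t j))⁻¹) with hD1def
  set D2 := Matrix.diagonal (fun j => ∏ k ∈ Finset.univ.erase j, (t j - t k)) with hD2def
  set D2' := Matrix.diagonal (fun j => (∏ k ∈ Finset.univ.erase j, (t j - t k))⁻¹) with hD2'def
  have hD2 : D2' * D2 = 1 := by
    rw [hD2'def, hD2def, Matrix.diagonal_mul_diagonal]
    have hfun : (fun j => (∏ k ∈ Finset.univ.erase j, (t j - t k))⁻¹ *
        ∏ k ∈ Finset.univ.erase j, (t j - t k)) = fun _ => (1 : ℂ) :=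
      funext fun j => inv_mul_cancel₀ (hne j)
    rw [hfun, Matrix.diagonal_one]
  have hmain : C * D2' * Vt = D1 * Vs := by
    ext i j
    rw [Matrix.mul_apply, hD1def, Matrix.diagonal_mul, hVs]
    have hsum : ∀ k, (C * D2') i k * Vt k j =
        (∏ m, (s i - t m))⁻¹ *
          (t k ^ (j : ℕ) * ∏ m ∈ Finset.univ.erase k, ((t k - t m)⁻¹ * (s i - t m))) := by
      intro k
      rw [hD2'def, Matrix.mul_diagonal, hC, hVt]
      have hQ : (∏ m ∈ Finset.univ.erase k, (s i - t m)) ≠ 0 :=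
        Finset.prod_ne_zero_iff.mpr fun m _ => sub_ne_zero.mpr (hst i m)
      rw [Finset.prod_mul_distrib, ← Finset.mul_prod_erase Finset.univ (fun m => (s i - t m))
        (Finset.mem_univ k), mul_inv]
      rw [Finset.prod_inv_distrib]
      set Q := ∏ m ∈ Finset.univ.erase k, (s i - t m)
      set R := ∏ m ∈ Finset.univ.erase k, (t k - t m)
      have : (s i - t k)⁻¹ * Q⁻¹ * (t k ^ (j : ℕ) * (R⁻¹ * Q)) =
          (s i - t k)⁻¹ * R⁻¹ * t k ^ (j : ℕ) * (Q⁻¹ * Q) := by ring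
      rw [this, inv_mul_cancel₀ hQ, mul_one]
    rw [Finset.sum_congr rfl fun k _ => hsum k, ← Finset.mul_sum, ← key (s i) j]
  have h1 : C * D2' = D1 * Vs * Vt⁻¹ := by
    calc C * D2' = C * D2' * Vt * Vt⁻¹ := (Matrix.mul_nonsing_inv_cancel_right _ _ hdet).symm
    _ = D1 * Vs * Vt⁻¹ := by rw [hmain]
  calc C = C * (D2' * D2) := by rw [hD2, Matrix.mul_one]
  _ = C * D2' * D2 := by rw [Matrix.mul_assoc]
  _ = D1 * Vs * Vt⁻¹ * D2 := by rw [h1]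
end

section
/- Let s_1,...,s_n, t_1,...,t_n be 2n distinct scalars with C = C_{s,t} = (1/(s_i - t_j)) the (nonsingular) Cauchy matrix. Then for any square matrices A (compatible with rows of M) and any matrix M: rank(A·(MC) - (MC)·D_t) ≤ rank(A·M - M·D_s) + 1, where D_s = diag(s_i), D_t = diag(t_j). That is, post-multiplication by a Cauchy matrix changes the diagonal operator matrix at the cost of increasing displacement rank by at most 1. -/
open Matrix

lemma my_rank_add_le {K : Type*} [Field K] {m n : ℕ}
    (A B : Matrix (Fin m) (Fin n) K) : (A + B).rank ≤ A.rank + B.rank := by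
  rw [Matrix.rank, Matrix.rank, Matrix.rank, Matrix.mulVecLin_add]
  have hle : LinearMap.range (A.mulVecLin + B.mulVecLin)
      ≤ LinearMap.range A.mulVecLin ⊔ LinearMap.range B.mulVecLin := by
    rintro x ⟨y, rfl⟩
    exact Submodule.add_mem_sup (LinearMap.mem_range_self _ y) (LinearMap.mem_range_self _ y)
  exact le_trans (Submodule.finrank_mono hle)
    (Submodule.finrank_add_le_finrank_add_finrank _ _)

theorem cauchy_postmultiplication_displacement {K : Type*} [Field K] (m n : ℕ)
    (s t : Fin n → K)
    (hs : Function.Injective s) (ht : Function.Injective t)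
    (hst : ∀ i j, s i ≠ t j)
    (C : Matrix (Fin n) (Fin n) K) (hC : ∀ i j, C i j = (s i - t j)⁻¹)
    (M : Matrix (Fin m) (Fin n) K) (A : Matrix (Fin m) (Fin m) K) :
    (A * (M * C) - (M * C) * Matrix.diagonal t).rank
      ≤ (A * M - M * Matrix.diagonal s).rank + 1 := by
  have hdisp : Matrix.diagonal s * C - C * Matrix.diagonal t
      = Matrix.vecMulVec (fun _ : Fin n => (1 : K)) (fun _ => 1) := by
    ext i j
    have hne : s i - t j ≠ 0 := sub_ne_zero.mpr (hst i j)
    simp [Matrix.diagonal_mul, Matrix.mul_diagonal, Matrix.vecMulVec_apply, hC,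
      mul_comm]
    field_simp
  have key : A * (M * C) - (M * C) * Matrix.diagonal t
      = (A * M - M * Matrix.diagonal s) * C
        + M * Matrix.vecMulVec (fun _ : Fin n => (1 : K)) (fun _ => 1) := by
    rw [← hdisp]
    simp only [Matrix.mul_sub, Matrix.sub_mul, Matrix.mul_add, Matrix.add_mul,
      Matrix.mul_assoc]
    abel
  rw [key]
  calc ((A * M - M * Matrix.diagonal s) * C
        + M * Matrix.vecMulVec (fun _ : Fin n => (1 : K)) (fun _ => 1)).rank
      ≤ ((A * M - M * Matrix.diagonal s) * C).rank
        + (M * Matrix.vecMulVec (fun _ : Fin n => (1 : K)) (fun _ => 1)).rank :=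
        my_rank_add_le _ _
    _ ≤ (A * M - M * Matrix.diagonal s).rank + 1 := by
        gcongr
        · exact Matrix.rank_mul_le_left _ _
        · calc (M * Matrix.vecMulVec (fun _ : Fin n => (1 : K)) (fun _ => 1)).rank
              ≤ (Matrix.vecMulVec (fun _ : Fin n => (1 : K)) (fun _ => (1:K))).rank :=
                Matrix.rank_mul_le_right _ _
            _ = (Matrix.replicateCol Unit (fun _ : Fin n => (1:K)) * Matrix.replicateRow Unit (fun _ : Fin n => (1:K))).rank := by
                rw [Matrix.vecMulVec_eq Unit]
            _ ≤ (Matrix.replicateRow Unit (fun _ : Fin n => (1:K))).rank := Matrix.rank_mul_le_right _ _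
            _ ≤ 1 := by simpa using Matrix.rank_le_card_height (Matrix.replicateRow Unit (fun _ : Fin n => (1:K)))
end
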